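/- For every bounded set A ⊆ ℝ there exists a function f : A → Bool such that for every interval I ⊆ ℝ, if I ∩ A is infinite then both {a ∈ I ∩ A : f(a) = true} and {a ∈ I ∩ A : f(a) = false} are infinite. -/

import Mathlib

open Set

/-! Auxiliary constructions for the coloring. -/

open Classical in
noncomputable def colStep (S : Set ℝ) (XY : Set ℝ × Set ℝ) : Set ℝ × Set ℝ :=
  if h : (S \ (XY.1 ∪ XY.2)).Infinite then
    (insert h.nonempty.some XY.1,
     insert ((h.diff (Set.finite_singleton h.nonempty.some)).nonempty).some XY.2)
  else XY

noncomputable def colIter (T : ℕ → Set ℝ) : ℕ → Set ℝ × Set ℝ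
  | 0 => (∅, ∅)
  | n + 1 => colStep (T n) (colIter T n)

lemma colStep_subset₁ (S : Set ℝ) (XY : Set ℝ × Set ℝ) : XY.1 ⊆ (colStep S XY).1 := by
  unfold colStep
  split
  · exact Set.subset_insert _ _
  · exact subset_rfl

lemma colStep_subset₂ (S : Set ℝ) (XY : Set ℝ × Set ℝ) : XY.2 ⊆ (colStep S XY).2 := by
  unfold colStep
  split
  · exact Set.subset_insert _ _
  · exact subset_rfl

lemma colIter_mono₁ (T : ℕ → Set ℝ) {m n : ℕ} (h : m ≤ n) :
    (colIter T m).1 ⊆ (colIter T n).1 := by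
  induction n with
  | zero => simp_all
  | succ n ih =>
    rcases Nat.lt_or_ge m (n + 1) with h' | h'
    · exact (ih (Nat.lt_succ_iff.mp h')).trans (colStep_subset₁ _ _)
    · have : m = n + 1 := le_antisymm h h'
      subst this; exact subset_rfl

lemma colIter_mono₂ (T : ℕ → Set ℝ) {m n : ℕ} (h : m ≤ n) :
    (colIter T m).2 ⊆ (colIter T n).2 := by
  induction n with
  | zero => simp_all
  | succ n ih =>
    rcases Nat.lt_or_ge m (n + 1) with h' | h'
    · exact (ih (Nat.lt_succ_iff.mp h')).trans (colStep_subset₂ _ _)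
    · have : m = n + 1 := le_antisymm h h'
      subst this; exact subset_rfl

lemma colIter_finite (T : ℕ → Set ℝ) (n : ℕ) :
    (colIter T n).1.Finite ∧ (colIter T n).2.Finite := by
  induction n with
  | zero => simp [colIter]
  | succ n ih =>
    show ((colStep (T n) (colIter T n)).1.Finite ∧ (colStep (T n) (colIter T n)).2.Finite)
    unfold colStep
    split
    · exact ⟨ih.1.insert _, ih.2.insert _⟩
    · exact ih

lemma colIter_disjoint (T : ℕ → Set ℝ) (n : ℕ) :
    ∀ a, a ∈ (colIter T n).1 → a ∉ (colIter T n).2 := by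
  induction n with
  | zero => simp [colIter]
  | succ n ih =>
    show ∀ a, a ∈ (colStep (T n) (colIter T n)).1 → a ∉ (colStep (T n) (colIter T n)).2
    unfold colStep
    split
    · rename_i h
      intro a ha hb
      have hxmem := h.nonempty.some_mem
      have hymem := ((h.diff (Set.finite_singleton h.nonempty.some)).nonempty).some_mem
      rcases Set.mem_insert_iff.mp ha with rfl | ha'
      · rcases Set.mem_insert_iff.mp hb with hb' | hb'
        · exact hymem.2 hb'.symm
        · exact hxmem.2 (Set.mem_union_right _ hb')
      · rcases Set.mem_insert_iff.mp hb with hb' | hb'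
        · exact hymem.1.2 (Set.mem_union_left _ (hb' ▸ ha'))
        · exact ih a ha' hb'
    · exact ih

lemma colIter_hit (T : ℕ → Set ℝ) (n : ℕ) (h : (T n).Infinite) :
    (∃ x ∈ T n, x ∈ (colIter T (n + 1)).1) ∧ (∃ y ∈ T n, y ∈ (colIter T (n + 1)).2) := by
  have hfin : ((colIter T n).1 ∪ (colIter T n).2).Finite :=
    (colIter_finite T n).1.union (colIter_finite T n).2
  have h' : (T n \ ((colIter T n).1 ∪ (colIter T n).2)).Infinite := h.diff hfin
  have : colIter T (n + 1) = colStep (T n) (colIter T n) := rfl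
  rw [this]
  unfold colStep
  rw [dif_pos h']
  exact ⟨⟨h'.nonempty.some, h'.nonempty.some_mem.1, Set.mem_insert _ _⟩,
    ⟨((h'.diff (Set.finite_singleton h'.nonempty.some)).nonempty).some,
      ((h'.diff (Set.finite_singleton h'.nonempty.some)).nonempty).some_mem.1.1,
      Set.mem_insert _ _⟩⟩

/-- Countably many infinite sets of reals can be simultaneously split by one 2-coloring. -/
lemma exists_two_coloring (T : ℕ → Set ℝ) :
    ∃ f : ℝ → Bool, ∀ n, (T n).Infinite →
      (∃ x ∈ T n, f x = true) ∧ (∃ y ∈ T n, f y = false) := by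
  classical
  refine ⟨fun x => decide (x ∈ ⋃ m, (colIter T m).1), fun n hn => ?_⟩
  obtain ⟨⟨x, hxT, hx⟩, ⟨y, hyT, hy⟩⟩ := colIter_hit T n hn
  constructor
  · exact ⟨x, hxT, by simp only [decide_eq_true_eq]; exact Set.mem_iUnion.mpr ⟨n + 1, hx⟩⟩
  · refine ⟨y, hyT, ?_⟩
    simp only [decide_eq_false_iff_not]
    intro hy'
    obtain ⟨m, hm⟩ := Set.mem_iUnion.mp hy'
    have h1 : y ∈ (colIter T (max m (n + 1))).1 := colIter_mono₁ T (le_max_left _ _) hm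
    have h2 : y ∈ (colIter T (max m (n + 1))).2 := colIter_mono₂ T (le_max_right _ _) hy
    exact colIter_disjoint T _ y h1 h2

/-- `p` is a left accumulation point of `A`. -/
def LptA (A : Set ℝ) (p : ℝ) : Prop := ∀ c < p, (A ∩ Set.Ioo c p).Infinite

/-- `p` is a right accumulation point of `A`. -/
def RptA (A : Set ℝ) (p : ℝ) : Prop := ∀ c, p < c → (A ∩ Set.Ioo p c).Infinite

open Classical in
noncomputable def famL (A : Set ℝ) (q : ℚ) : Set ℝ :=
  if h : ∃ p, LptA A p ∧ (q : ℝ) < p ∧ ∀ c < p, (A ∩ Set.Ioo (q : ℝ) c).Finite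
  then A ∩ Set.Ioo (q : ℝ) h.choose else ∅

open Classical in
noncomputable def famR (A : Set ℝ) (q : ℚ) : Set ℝ :=
  if h : ∃ p, RptA A p ∧ p < (q : ℝ) ∧ ∀ c, p < c → (A ∩ Set.Ioo c (q : ℝ)).Finite
  then A ∩ Set.Ioo h.choose (q : ℝ) else ∅

noncomputable def fam (A : Set ℝ) : (ℚ × ℚ) ⊕ (ℚ ⊕ ℚ) → Set ℝ
  | .inl (q, r) => A ∩ Set.Ioo (q : ℝ) (r : ℝ)
  | .inr (.inl q) => famL A q
  | .inr (.inr q) => famR A q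

lemma coverL {A : Set ℝ} {p c : ℝ} (hp : LptA A p) (hc : c < p) :
    ∃ i, (fam A i).Infinite ∧ fam A i ⊆ A ∩ Set.Ioo c p := by
  by_cases hcase : ∃ q r : ℚ, c < (q : ℝ) ∧ (q : ℝ) < (r : ℝ) ∧ (r : ℝ) < p ∧
      (A ∩ Set.Ioo (q : ℝ) (r : ℝ)).Infinite
  · obtain ⟨q, r, h1, h2, h3, h4⟩ := hcase
    exact ⟨.inl (q, r), h4,
      fun x hx => ⟨hx.1, lt_trans h1 hx.2.1, lt_trans hx.2.2 h3⟩⟩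
  · push_neg at hcase
    obtain ⟨q, hq1, hq2⟩ := exists_rat_btwn hc
    have hPp : LptA A p ∧ (q : ℝ) < p ∧ ∀ c' < p, (A ∩ Set.Ioo (q : ℝ) c').Finite := by
      refine ⟨hp, hq2, fun c' hc' => ?_⟩
      rcases le_or_gt c' (q : ℝ) with hcq | hcq
      · rw [Set.Ioo_eq_empty (not_lt.mpr hcq)]
        exact Set.finite_empty.inter_of_right A
      · obtain ⟨r, hr1, hr2⟩ := exists_rat_btwn hc'
        have hfin := hcase q r hq1 (lt_trans hcq hr1) hr2
        exact hfin.subset (Set.inter_subset_inter_right _ (Set.Ioo_subset_Ioo_right hr1.le))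
    have hex : ∃ p', LptA A p' ∧ (q : ℝ) < p' ∧ ∀ c' < p', (A ∩ Set.Ioo (q : ℝ) c').Finite :=
      ⟨p, hPp⟩
    have huniq : hex.choose = p := by
      obtain ⟨h1, h2, h3⟩ := hex.choose_spec
      by_contra hne
      rcases lt_or_gt_of_ne hne with hlt | hgt
      · exact (h1 (q : ℝ) h2) (hPp.2.2 hex.choose hlt)
      · exact (hp (q : ℝ) hq2) (h3 p hgt)
    refine ⟨.inr (.inl q), ?_, ?_⟩
    · show (famL A q).Infinite
      unfold famL
      rw [dif_pos hex, huniq]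
      exact hp (q : ℝ) hq2
    · show famL A q ⊆ A ∩ Set.Ioo c p
      unfold famL
      rw [dif_pos hex, huniq]
      exact Set.inter_subset_inter_right _ (Set.Ioo_subset_Ioo_left hq1.le)

lemma coverR {A : Set ℝ} {p c : ℝ} (hp : RptA A p) (hc : p < c) :
    ∃ i, (fam A i).Infinite ∧ fam A i ⊆ A ∩ Set.Ioo p c := by
  by_cases hcase : ∃ q r : ℚ, p < (q : ℝ) ∧ (q : ℝ) < (r : ℝ) ∧ (r : ℝ) < c ∧
      (A ∩ Set.Ioo (q : ℝ) (r : ℝ)).Infinite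
  · obtain ⟨q, r, h1, h2, h3, h4⟩ := hcase
    exact ⟨.inl (q, r), h4,
      fun x hx => ⟨hx.1, lt_trans h1 hx.2.1, lt_trans hx.2.2 h3⟩⟩
  · push_neg at hcase
    obtain ⟨q, hq1, hq2⟩ := exists_rat_btwn hc
    have hPp : RptA A p ∧ p < (q : ℝ) ∧ ∀ c', p < c' → (A ∩ Set.Ioo c' (q : ℝ)).Finite := by
      refine ⟨hp, hq1, fun c' hc' => ?_⟩
      rcases le_or_gt (q : ℝ) c' with hcq | hcq
      · rw [Set.Ioo_eq_empty (not_lt.mpr hcq)]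
        exact Set.finite_empty.inter_of_right A
      · obtain ⟨r, hr1, hr2⟩ := exists_rat_btwn hc'
        have hfin := hcase r q hr1 (lt_trans hr2 hcq) hq2
        exact hfin.subset (Set.inter_subset_inter_right _ (Set.Ioo_subset_Ioo_left hr2.le))
    have hex : ∃ p', RptA A p' ∧ p' < (q : ℝ) ∧ ∀ c', p' < c' → (A ∩ Set.Ioo c' (q : ℝ)).Finite :=
      ⟨p, hPp⟩
    have huniq : hex.choose = p := by
      obtain ⟨h1, h2, h3⟩ := hex.choose_spec
      by_contra hne
      rcases lt_or_gt_of_ne hne with hlt | hgt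
      · exact (hp (q : ℝ) hq1) (h3 p hlt)
      · exact (h1 (q : ℝ) h2) (hPp.2.2 hex.choose hgt)
    refine ⟨.inr (.inr q), ?_, ?_⟩
    · show (famR A q).Infinite
      unfold famR
      rw [dif_pos hex, huniq]
      exact hp (q : ℝ) hq1
    · show famR A q ⊆ A ∩ Set.Ioo p c
      unfold famR
      rw [dif_pos hex, huniq]
      exact Set.inter_subset_inter_right _ (Set.Ioo_subset_Ioo_right hq2.le)

lemma cofinal_lt_infinite {p : ℝ} {W : Set ℝ}
    (h : ∀ c < p, ∃ a ∈ W, c < a ∧ a < p) : W.Infinite := by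
  by_contra hf
  rw [Set.not_infinite] at hf
  set W' : Set ℝ := {a ∈ W | a < p} with hW'
  have hfin : W'.Finite := hf.subset (Set.sep_subset _ _)
  have hne : W'.Nonempty := by
    obtain ⟨a, ha, h1, h2⟩ := h (p - 1) (by linarith)
    exact ⟨a, ha, h2⟩
  obtain ⟨b, hb, hmax⟩ := Set.Finite.exists_maximalFor id W' hfin hne
  obtain ⟨a, ha, h1, h2⟩ := h b hb.2
  have : b = a := le_antisymm h1.le (hmax ⟨ha, h2⟩ h1.le)
  exact absurd this (ne_of_lt h1)

lemma cofinal_gt_infinite {p : ℝ} {W : Set ℝ}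
    (h : ∀ c, p < c → ∃ a ∈ W, a < c ∧ p < a) : W.Infinite := by
  by_contra hf
  rw [Set.not_infinite] at hf
  set W' : Set ℝ := {a ∈ W | p < a} with hW'
  have hfin : W'.Finite := hf.subset (Set.sep_subset _ _)
  have hne : W'.Nonempty := by
    obtain ⟨a, ha, h1, h2⟩ := h (p + 1) (by linarith)
    exact ⟨a, ha, h2⟩
  obtain ⟨b, hb, hmin⟩ := Set.Finite.exists_minimalFor id W' hfin hne
  obtain ⟨a, ha, h1, h2⟩ := h b hb.2
  have : b = a := le_antisymm (hmin ⟨ha, h2⟩ h1.le) h1.le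
  exact absurd this (ne_of_gt h1)

lemma bw {A : Set ℝ} (hA : Bornology.IsBounded A) {I : Set ℝ} (hI : I.OrdConnected)
    (h : (I ∩ A).Infinite) :
    (∃ p c, LptA A p ∧ c < p ∧ Set.Ioo c p ⊆ I) ∨
    (∃ p c, RptA A p ∧ p < c ∧ Set.Ioo p c ⊆ I) := by
  set B : Set ℝ := I ∩ A with hBdef
  have hB : B.Infinite := h
  have hBb : Bornology.IsBounded B := hA.subset Set.inter_subset_right
  obtain ⟨⟨l, hl⟩, ⟨u, hu⟩⟩ := isBounded_iff_bddBelow_bddAbove.mp hBb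
  set E : Set ℝ := {x | (B ∩ Set.Iic x).Finite} with hEdef
  have hEne : E.Nonempty := by
    refine ⟨l - 1, ?_⟩
    have : B ∩ Set.Iic (l - 1) = ∅ := by
      ext b
      simp only [Set.mem_inter_iff, Set.mem_Iic, Set.mem_empty_iff_false, iff_false, not_and]
      intro hb hble
      have := hl hb
      linarith
    show (B ∩ Set.Iic (l - 1)).Finite
    rw [this]
    exact Set.finite_empty
  have hEbdd : BddAbove E := by
    refine ⟨u, fun x hx => ?_⟩
    by_contra hxu
    push_neg at hxu
    have : B ∩ Set.Iic x = B := by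
      apply Set.inter_eq_self_of_subset_left
      intro b hb
      exact (hu hb).trans hxu.le
    rw [hEdef] at hx
    exact hB (this ▸ hx)
  set p : ℝ := sSup E with hpdef
  have key2 : ∀ c', p < c' → (B ∩ Set.Iic c').Infinite := by
    intro c' hc'
    by_contra hfin
    rw [Set.not_infinite] at hfin
    exact absurd (le_csSup hEbdd hfin) (not_le.mpr hc')
  have star : ∀ c < p, ∀ c', p < c' → (B ∩ Set.Ioo c c').Infinite := by
    intro c hc c' hc'
    obtain ⟨x, hxE, hcx⟩ := exists_lt_of_lt_csSup hEne hc
    have hsub : (B ∩ Set.Iic c') \ ((B ∩ Set.Iic x) ∪ {c'}) ⊆ B ∩ Set.Ioo c c' := by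
      rintro b ⟨⟨hbB, hbc'⟩, hb⟩
      simp only [Set.mem_union, Set.mem_inter_iff, Set.mem_Iic, Set.mem_singleton_iff,
        not_or, not_and, not_le] at hb
      exact ⟨hbB, lt_trans hcx (hb.1 hbB), lt_of_le_of_ne hbc' hb.2⟩
    exact (((key2 c' hc').diff (hxE.union (Set.finite_singleton c'))).mono hsub)
  by_cases hL : ∀ c < p, (B ∩ Set.Ioo c p).Infinite
  · left
    obtain ⟨b₀, hb₀B, hb₀1, hb₀2⟩ := (hL (p - 1) (by linarith)).nonempty
    refine ⟨p, b₀, fun c hc => (hL c hc).mono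
      (Set.inter_subset_inter_left _ Set.inter_subset_right), hb₀2, ?_⟩
    intro z hz
    obtain ⟨b₁, hb₁B, hb₁1, hb₁2⟩ := (hL z hz.2).nonempty
    exact hI.out hb₀B.1 hb₁B.1 ⟨hz.1.le, hb₁1.le⟩
  · right
    push_neg at hL
    obtain ⟨c₀, hc₀, hfin₀⟩ := hL
    have hR : ∀ c', p < c' → (B ∩ Set.Ioo p c').Infinite := by
      intro c' hc'
      have hsub : (B ∩ Set.Ioo c₀ c') \ ((B ∩ Set.Ioo c₀ p) ∪ {p}) ⊆ B ∩ Set.Ioo p c' := by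
        rintro b ⟨⟨hbB, hb1, hb2⟩, hb⟩
        simp only [Set.mem_union, Set.mem_inter_iff, Set.mem_Ioo, Set.mem_singleton_iff,
          not_or, not_and] at hb
        have hbp : ¬ b < p := fun hlt => hb.1 hbB hb1 hlt
        exact ⟨hbB, lt_of_le_of_ne (not_lt.mp hbp) (Ne.symm hb.2), hb2⟩
      exact ((star c₀ hc₀ c' hc').diff (hfin₀.union (Set.finite_singleton p))).mono hsub
    obtain ⟨b₀, hb₀B, hb₀1, hb₀2⟩ := (hR (p + 1) (by linarith)).nonempty
    refine ⟨p, b₀, fun c hc => (hR c hc).mono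
      (Set.inter_subset_inter_left _ Set.inter_subset_right), hb₀1, ?_⟩
    intro z hz
    obtain ⟨b₁, hb₁B, hb₁1, hb₁2⟩ := (hR z hz.1).nonempty
    exact hI.out hb₁B.1 hb₀B.1 ⟨hb₁2.le, hz.2.le⟩

/-- Every bounded set `A ⊆ ℝ` admits a two-coloring such that every
interval (order-convex subset of `ℝ`) meeting `A` in infinitely many points contains
infinitely many points of `A` of each color. -/
theorem bounded_real_set_interval_coloring
    (A : Set ℝ) (hA : Bornology.IsBounded A) :
    ∃ f : ℝ → Bool,
      ∀ I : Set ℝ, I.OrdConnected → (I ∩ A).Infinite →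
        {a ∈ I ∩ A | f a = true}.Infinite ∧ {a ∈ I ∩ A | f a = false}.Infinite := by
  classical
  obtain ⟨e, he⟩ := exists_surjective_nat ((ℚ × ℚ) ⊕ (ℚ ⊕ ℚ))
  obtain ⟨f, hf⟩ := exists_two_coloring (fun n => fam A (e n))
  have hhit : ∀ i, (fam A i).Infinite →
      (∃ x ∈ fam A i, f x = true) ∧ (∃ y ∈ fam A i, f y = false) := by
    intro i hi
    obtain ⟨n, rfl⟩ := he i
    exact hf n hi
  refine ⟨f, fun I hI hinf => ?_⟩
  rcases bw hA hI hinf with ⟨p, c, hp, hc, hsub⟩ | ⟨p, c, hp, hc, hsub⟩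
  · have key : ∀ b : Bool, ∀ c'' < p, ∃ a, (a ∈ I ∩ A ∧ f a = b) ∧ c'' < a ∧ a < p := by
      intro b c'' hc''
      have hmax : max c c'' < p := max_lt hc hc''
      obtain ⟨i, hiInf, hiSub⟩ := coverL hp hmax
      obtain ⟨⟨x, hxmem, hx⟩, ⟨y, hymem, hy⟩⟩ := hhit i hiInf
      cases b with
      | true =>
        obtain ⟨hxA, hx1, hx2⟩ := hiSub hxmem
        exact ⟨x, ⟨⟨hsub ⟨lt_of_le_of_lt (le_max_left _ _) hx1, hx2⟩, hxA⟩, hx⟩,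
          lt_of_le_of_lt (le_max_right _ _) hx1, hx2⟩
      | false =>
        obtain ⟨hyA, hy1, hy2⟩ := hiSub hymem
        exact ⟨y, ⟨⟨hsub ⟨lt_of_le_of_lt (le_max_left _ _) hy1, hy2⟩, hyA⟩, hy⟩,
          lt_of_le_of_lt (le_max_right _ _) hy1, hy2⟩
    constructor
    · exact cofinal_lt_infinite (p := p) (fun c'' hc'' => key true c'' hc'')
    · exact cofinal_lt_infinite (p := p) (fun c'' hc'' => key false c'' hc'')
  · have key : ∀ b : Bool, ∀ c'', p < c'' → ∃ a, (a ∈ I ∩ A ∧ f a = b) ∧ a < c'' ∧ p < a := by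
      intro b c'' hc''
      have hmin : p < min c c'' := lt_min hc hc''
      obtain ⟨i, hiInf, hiSub⟩ := coverR hp hmin
      obtain ⟨⟨x, hxmem, hx⟩, ⟨y, hymem, hy⟩⟩ := hhit i hiInf
      cases b with
      | true =>
        obtain ⟨hxA, hx1, hx2⟩ := hiSub hxmem
        exact ⟨x, ⟨⟨hsub ⟨hx1, lt_of_lt_of_le hx2 (min_le_left _ _)⟩, hxA⟩, hx⟩,
          lt_of_lt_of_le hx2 (min_le_right _ _), hx1⟩
      | false =>
        obtain ⟨hyA, hy1, hy2⟩ := hiSub hymem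
        exact ⟨y, ⟨⟨hsub ⟨hy1, lt_of_lt_of_le hy2 (min_le_left _ _)⟩, hyA⟩, hy⟩,
          lt_of_lt_of_le hy2 (min_le_right _ _), hy1⟩
    constructor
    · exact cofinal_gt_infinite (p := p) (fun c'' hc'' => key true c'' hc'')
    · exact cofinal_gt_infinite (p := p) (fun c'' hc'' => key false c'' hc'')
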